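/- Let d ≥ 2 and define ψ(ξ') = 1 − √(1 − |ξ'|²) for ξ' ∈ ℝ^{d−1} with |ξ'| < 1, and a_δ(τ, ξ') = δ / (τ²(τ + 2ψ(ξ') − 2)² + δ²). Then for every n ∈ ℕ there exists a constant C_n > 0 such that for all δ ∈ (0,1], all τ ∈ ℝ with |τ| ≤ 1/4, and all ξ' ∈ ℝ^{d−1} with |ξ'| ≤ 1/10, the n-th order total derivative in ξ' satisfies ‖D^n_{ξ'} a_δ(τ, ξ')‖ ≤ C_n · δ / (τ²(τ + 2ψ(ξ') − 2)² + δ²). -/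

import Mathlib

open Real
open scoped ENNReal

noncomputable section

/-- `ψ(ξ') = 1 − √(1 − |ξ'|²)` on `ℝ^{d−1}`. -/
def psiFn (m : ℕ) (w : EuclideanSpace ℝ (Fin m)) : ℝ := 1 - Real.sqrt (1 - ‖w‖ ^ 2)

/-- `a_δ(τ, ξ') = δ / (τ²(τ + 2ψ(ξ') − 2)² + δ²)`. -/
def aDelta (m : ℕ) (δ τ : ℝ) (w : EuclideanSpace ℝ (Fin m)) : ℝ :=
  δ / (τ ^ 2 * (τ + 2 * psiFn m w - 2) ^ 2 + δ ^ 2)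

/-! ### Auxiliary definitions and lemmas -/

/-- `φ(w) = √(1 − |w|²)`. -/
def phiFn (m : ℕ) (w : EuclideanSpace ℝ (Fin m)) : ℝ := Real.sqrt (1 - ‖w‖ ^ 2)

/-- The denominator of `a_δ`. -/
def gFn (m : ℕ) (δ τ : ℝ) (w : EuclideanSpace ℝ (Fin m)) : ℝ :=
  τ ^ 2 * (τ + 2 * psiFn m w - 2) ^ 2 + δ ^ 2

lemma iterDeriv_const_mul (c : ℝ) (f : ℝ → ℝ) (k : ℕ) :
    deriv^[k] (fun t => c * f t) = fun t => c * deriv^[k] f t := by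
  induction k with
  | zero => rfl
  | succ k ih =>
    rw [Function.iterate_succ_apply', Function.iterate_succ_apply', ih]
    exact deriv_const_mul_field' c

lemma prod_one_add_eq_factorial (k : ℕ) :
    ∏ i ∈ Finset.range k, (1 + (i : ℝ)) = k.factorial := by
  induction k with
  | zero => simp
  | succ k ih => rw [Finset.prod_range_succ, ih, Nat.factorial_succ]; push_cast; ring

/-- Norm of the `k`-th derivative of `t ↦ δ / t` at `y > 0`. -/
lemma outer_bound (δ : ℝ) (k : ℕ) {y : ℝ} (hy : 0 < y) :
    ‖iteratedFDerivWithin ℝ k (fun t => δ / t) (Set.Ioi (0:ℝ)) y‖ =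
      |δ| * k.factorial / y ^ (k + 1) := by
  rw [iteratedFDerivWithin_of_isOpen k isOpen_Ioi hy,
    norm_iteratedFDeriv_eq_norm_iteratedDeriv, iteratedDeriv_eq_iterate]
  have h1 : (fun t : ℝ => δ / t) = fun t => δ * t⁻¹ := by
    funext t; rw [div_eq_mul_inv]
  rw [h1, iterDeriv_const_mul]
  simp only []
  rw [iter_deriv_inv k y]
  have h3 : |∏ i ∈ Finset.range k, (-1 - (i:ℝ))| = k.factorial := by
    rw [Finset.abs_prod, ← prod_one_add_eq_factorial k]
    refine Finset.prod_congr rfl fun i _ => ?_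
    have he : (-1 - (i:ℝ)) = -(1 + i) := by ring
    rw [he, abs_neg, abs_of_nonneg (by positivity)]
  have h4 : (-1 - (k:ℤ)) = -((k:ℤ) + 1) := by ring
  have h5 : y ^ (-1 - k : ℤ) = (y ^ (k + 1))⁻¹ := by
    rw [h4, zpow_neg]
    norm_cast
  rw [Real.norm_eq_abs, abs_mul, abs_mul, abs_mul, abs_pow, abs_neg, abs_one, one_pow, one_mul,
    Nat.abs_cast, h5,
    abs_of_nonneg (by positivity : (0:ℝ) ≤ (y ^ (k+1))⁻¹)]
  rw [div_eq_mul_inv, mul_assoc]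

/-- Uniform bound for finitely many iterated derivatives on a compact subset. -/
lemma exists_uniform_bound {E : Type*} [NormedAddCommGroup E] [NormedSpace ℝ E]
    {f : E → ℝ} {U : Set E} (hU : IsOpen U) (n : ℕ) (hf : ContDiffOn ℝ n f U)
    {K : Set E} (hK : IsCompact K) (hKU : K ⊆ U) :
    ∃ M : ℝ, 0 ≤ M ∧ ∀ j ≤ n, ∀ w ∈ K, ‖iteratedFDerivWithin ℝ j f U w‖ ≤ M := by
  have h : ∀ j : Fin (n+1), ∃ M, ∀ w ∈ K, ‖iteratedFDerivWithin ℝ (j:ℕ) f U w‖ ≤ M := by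
    intro j
    have hc : ContinuousOn (iteratedFDerivWithin ℝ (j:ℕ) f U) U :=
      hf.continuousOn_iteratedFDerivWithin (by exact_mod_cast Nat.lt_succ_iff.mp j.2)
        hU.uniqueDiffOn
    exact hK.exists_bound_of_continuousOn (hc.mono hKU)
  choose M hM using h
  refine ⟨max 0 (Finset.univ.sup' Finset.univ_nonempty M), le_max_left _ _,
    fun j hj w hw => ?_⟩
  refine le_trans (hM ⟨j, Nat.lt_succ_of_le hj⟩ w hw) (le_trans ?_ (le_max_right _ _))
  exact Finset.le_sup' M (Finset.mem_univ _)

lemma norm_compAlongOrderedFinpartition_le {𝕜 E F G : Type*} [NontriviallyNormedField 𝕜]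
    [NormedAddCommGroup E] [NormedSpace 𝕜 E] [NormedAddCommGroup F]
    [NormedSpace 𝕜 F] [NormedAddCommGroup G] [NormedSpace 𝕜 G] {n : ℕ}
    (q : FormalMultilinearSeries 𝕜 F G) (p : FormalMultilinearSeries 𝕜 E F)
    (c : OrderedFinpartition n) :
    ‖q.compAlongOrderedFinpartition p c‖ ≤ ‖q c.length‖ * ∏ m, ‖p (c.partSize m)‖ := by
  apply ContinuousMultilinearMap.opNorm_le_bound (by positivity) fun v => ?_
  rw [FormalMultilinearSeries.compAlongOrderedFinpartition_apply]
  apply ((q c.length).le_opNorm _).trans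
  rw [mul_assoc, ← c.prod_sigma_eq_prod, ← Finset.prod_mul_distrib]
  gcongr with m _
  exact (p (c.partSize m)).le_opNorm _

lemma phiFn_contDiffOn (m : ℕ) (n : ℕ) :
    ContDiffOn ℝ n (phiFn m) (Metric.ball (0 : EuclideanSpace ℝ (Fin m)) (1/2)) := by
  intro w hw
  have hw' : ‖w‖ < 1/2 := by rwa [Metric.mem_ball, dist_zero_right] at hw
  have h : (0:ℝ) < 1 - ‖w‖ ^ 2 := by nlinarith [norm_nonneg w]
  have h2 : ContDiffWithinAt ℝ n (fun w : EuclideanSpace ℝ (Fin m) => 1 - ‖w‖ ^ 2)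
      (Metric.ball 0 (1/2)) w :=
    (contDiffWithinAt_const.sub (contDiff_norm_sq ℝ).contDiffAt.contDiffWithinAt)
  exact (Real.contDiffAt_sqrt h.ne').comp_contDiffWithinAt w h2

lemma gFn_eq_decomp (m : ℕ) (δ τ : ℝ) :
    gFn m δ τ = fun w => (-4*τ^3) • phiFn m w +
      ((4*τ^2) • (phiFn m w * phiFn m w) + (τ^4 + δ^2)) := by
  funext w
  simp only [gFn, psiFn, phiFn, smul_eq_mul]
  ring

lemma sq_tau_le_gFn {m : ℕ} {δ τ : ℝ} (hτ : |τ| ≤ 1/4)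
    {w : EuclideanSpace ℝ (Fin m)} (hw : ‖w‖ ≤ 1/10) :
    1 ≤ (τ + 2 * psiFn m w - 2) ^ 2 ∧ τ ^ 2 ≤ gFn m δ τ w := by
  have h1 : (99:ℝ)/100 ≤ 1 - ‖w‖ ^ 2 := by nlinarith [norm_nonneg w]
  have h0 : (0:ℝ) ≤ 1 - ‖w‖ ^ 2 := by linarith
  have hs2 := Real.sq_sqrt h0
  have hs0 := Real.sqrt_nonneg (1 - ‖w‖ ^ 2)
  have hs : (99:ℝ)/100 ≤ Real.sqrt (1 - ‖w‖ ^ 2) := by nlinarith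
  have hτ' := abs_le.mp hτ
  have hq : τ + 2 * psiFn m w - 2 ≤ -1 := by
    simp only [psiFn]; linarith
  have hq2 : 1 ≤ (τ + 2 * psiFn m w - 2) ^ 2 := by nlinarith
  refine ⟨hq2, ?_⟩
  have : 0 ≤ τ ^ 2 * ((τ + 2 * psiFn m w - 2) ^ 2 - 1) :=
    mul_nonneg (sq_nonneg τ) (by linarith)
  simp only [gFn]
  nlinarith [sq_nonneg δ]

lemma gFn_deriv_bound {m : ℕ} {n j : ℕ} (hj1 : 1 ≤ j) (hjn : j ≤ n)
    {δ τ : ℝ} (hτ : |τ| ≤ 1/4) {K1 K2 : ℝ} (hK10 : 0 ≤ K1) (hK20 : 0 ≤ K2)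
    (hK1 : ∀ v ∈ Metric.closedBall (0 : EuclideanSpace ℝ (Fin m)) (1/10),
      ‖iteratedFDerivWithin ℝ j (phiFn m) (Metric.ball 0 (1/2)) v‖ ≤ K1)
    (hK2 : ∀ v ∈ Metric.closedBall (0 : EuclideanSpace ℝ (Fin m)) (1/10),
      ‖iteratedFDerivWithin ℝ j (fun v => phiFn m v * phiFn m v) (Metric.ball 0 (1/2)) v‖ ≤ K2)
    {w : EuclideanSpace ℝ (Fin m)} (hw : w ∈ Metric.closedBall (0 : EuclideanSpace ℝ (Fin m)) (1/10)) :
    ‖iteratedFDerivWithin ℝ j (gFn m δ τ) (Metric.ball 0 (1/2)) w‖ ≤ (4*(K1+K2)+1) * τ ^ 2 := by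
  have hw' : w ∈ Metric.ball (0 : EuclideanSpace ℝ (Fin m)) (1/2) :=
    Metric.closedBall_subset_ball (by norm_num) hw
  have hU : UniqueDiffOn ℝ (Metric.ball (0 : EuclideanSpace ℝ (Fin m)) (1/2)) :=
    Metric.isOpen_ball.uniqueDiffOn
  have hφj : ContDiffOn ℝ j (phiFn m) (Metric.ball 0 (1/2)) := phiFn_contDiffOn m j
  have hφφj : ContDiffOn ℝ j (fun v => phiFn m v * phiFn m v) (Metric.ball 0 (1/2)) :=
    hφj.mul hφj
  have e : iteratedFDerivWithin ℝ j (gFn m δ τ) (Metric.ball 0 (1/2)) w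
      = (-4*τ^3) • iteratedFDerivWithin ℝ j (phiFn m) (Metric.ball 0 (1/2)) w
        + (4*τ^2) • iteratedFDerivWithin ℝ j (fun v => phiFn m v * phiFn m v)
            (Metric.ball 0 (1/2)) w := by
    rw [gFn_eq_decomp m δ τ]
    rw [iteratedFDerivWithin_add_apply' (hφj.const_smul (-4*τ^3) w hw')
      (((hφφj.const_smul (4*τ^2)).add contDiffOn_const) w hw') hU hw']
    rw [iteratedFDerivWithin_add_apply' (hφφj.const_smul (4*τ^2) w hw') contDiffWithinAt_const hU hw']
    rw [iteratedFDerivWithin_const_of_ne (by omega) _ _, Pi.zero_apply]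
    have e1 : (fun w => (-4*τ^3) • phiFn m w) = (-4*τ^3) • phiFn m := rfl
    have e2 : (fun w => (4*τ^2) • (phiFn m w * phiFn m w))
        = (4*τ^2) • fun v => phiFn m v * phiFn m v := rfl
    rw [e1, e2, iteratedFDerivWithin_const_smul_apply (hφj w hw') hU hw',
      iteratedFDerivWithin_const_smul_apply (hφφj w hw') hU hw', add_zero]
  rw [e]
  have hτ1 : |τ| ≤ 1 := hτ.trans (by norm_num)
  have habs3 : |(-4*τ^3 : ℝ)| ≤ 4 * τ ^ 2 := by
    have h1 : |(-4*τ^3 : ℝ)| = 4 * |τ| ^ 3 := by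
      rw [show (-4*τ^3 : ℝ) = -(4*τ^3) by ring, abs_neg, abs_mul, abs_pow]
      norm_num
    have h2 : |τ| ^ 3 ≤ |τ| ^ 2 :=
      pow_le_pow_of_le_one (abs_nonneg τ) hτ1 (by norm_num)
    rw [h1]
    calc 4 * |τ| ^ 3 ≤ 4 * |τ| ^ 2 := by linarith
      _ = 4 * τ ^ 2 := by rw [sq_abs]
  have habs2 : |(4*τ^2 : ℝ)| = 4 * τ ^ 2 := by
    rw [abs_of_nonneg (by positivity)]
  calc ‖(-4*τ^3) • iteratedFDerivWithin ℝ j (phiFn m) (Metric.ball 0 (1/2)) w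
        + (4*τ^2) • iteratedFDerivWithin ℝ j (fun v => phiFn m v * phiFn m v)
            (Metric.ball 0 (1/2)) w‖
      ≤ |(-4*τ^3 : ℝ)| * K1 + |(4*τ^2 : ℝ)| * K2 := by
        refine (norm_add_le _ _).trans (add_le_add ?_ ?_)
        · rw [norm_smul, Real.norm_eq_abs]
          exact mul_le_mul_of_nonneg_left (hK1 w hw) (abs_nonneg _)
        · rw [norm_smul, Real.norm_eq_abs]
          exact mul_le_mul_of_nonneg_left (hK2 w hw) (abs_nonneg _)
    _ ≤ (4*(K1+K2)+1) * τ ^ 2 := by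
        rw [habs2]
        nlinarith [sq_nonneg τ, mul_le_mul_of_nonneg_right habs3 hK10]

/-- **Lemma 3.2, bounds for `a_δ`.** Let `d ≥ 2`. For every `n` there
is `C_n > 0` such that for all `δ ∈ (0,1]`, `|τ| ≤ 1/4` and `|ξ'| ≤ 1/10`,
`‖D^n_{ξ'} a_δ(τ, ξ')‖ ≤ C_n · δ / (τ²(τ + 2ψ(ξ') − 2)² + δ²)`. -/
theorem aDelta_deriv_bounds (d : ℕ) (hd : 2 ≤ d) (n : ℕ) :
    ∃ C : ℝ, 0 < C ∧ ∀ δ : ℝ, δ ∈ Set.Ioc (0 : ℝ) 1 → ∀ τ : ℝ, |τ| ≤ 1 / 4 →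
      ∀ w : EuclideanSpace ℝ (Fin (d - 1)), ‖w‖ ≤ 1 / 10 →
        ‖iteratedFDeriv ℝ n (aDelta (d - 1) δ τ) w‖ ≤
          C * (δ / (τ ^ 2 * (τ + 2 * psiFn (d - 1) w - 2) ^ 2 + δ ^ 2)) := by
  classical
  set m := d - 1 with hm
  set U : Set (EuclideanSpace ℝ (Fin m)) := Metric.ball 0 (1/2) with hUdef
  have hUo : IsOpen U := Metric.isOpen_ball
  have hU : UniqueDiffOn ℝ U := hUo.uniqueDiffOn
  have hKU : Metric.closedBall (0 : EuclideanSpace ℝ (Fin m)) (1/10) ⊆ U :=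
    Metric.closedBall_subset_ball (by norm_num)
  have hφ : ContDiffOn ℝ n (phiFn m) U := phiFn_contDiffOn m n
  obtain ⟨K1, hK10, hK1⟩ := exists_uniform_bound hUo n hφ
    (isCompact_closedBall (0 : EuclideanSpace ℝ (Fin m)) (1/10)) hKU
  obtain ⟨K2, hK20, hK2⟩ := exists_uniform_bound hUo n (hφ.mul hφ)
    (isCompact_closedBall (0 : EuclideanSpace ℝ (Fin m)) (1/10)) hKU
  set Kb : ℝ := 4*(K1+K2)+1 with hKbdef
  have hKb1 : 1 ≤ Kb := by simp only [hKbdef]; linarith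
  have hKb0 : 0 < Kb := by linarith
  have hcard : 0 < (Fintype.card (OrderedFinpartition n) : ℝ) := by
    exact_mod_cast Fintype.card_pos
  refine ⟨(Fintype.card (OrderedFinpartition n) : ℝ) * n.factorial * Kb ^ n, by positivity,
    ?_⟩
  rintro δ ⟨hδ0, hδ1⟩ τ hτ w hw
  have hw' : w ∈ U := hKU (by rwa [Metric.mem_closedBall, dist_zero_right])
  have hwK : w ∈ Metric.closedBall (0 : EuclideanSpace ℝ (Fin m)) (1/10) := by
    rwa [Metric.mem_closedBall, dist_zero_right]
  have hgpos : ∀ v, 0 < gFn m δ τ v := by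
    intro v; simp only [gFn]; positivity
  have hτ2g := (sq_tau_le_gFn (δ := δ) hτ hw).2
  -- smoothness of the denominator
  have hψcd : ContDiffOn ℝ n (fun v : EuclideanSpace ℝ (Fin m) =>
      τ + 2 * psiFn m v - 2) U := by
    have he : (fun v : EuclideanSpace ℝ (Fin m) => τ + 2 * psiFn m v - 2)
        = fun v => τ + 2 * (1 - phiFn m v) - 2 := rfl
    rw [he]
    exact (contDiffOn_const.add (contDiffOn_const.mul (contDiffOn_const.sub hφ))).sub
      contDiffOn_const
  have hgcd : ContDiffOn ℝ n (gFn m δ τ) U := by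
    have he : gFn m δ τ = fun v => τ ^ 2 * (τ + 2 * psiFn m v - 2) ^ 2 + δ ^ 2 := rfl
    rw [he]
    exact (contDiffOn_const.mul (hψcd.pow 2)).add contDiffOn_const
  have houter : ContDiffOn ℝ n (fun t : ℝ => δ / t) (Set.Ioi 0) :=
    contDiffOn_const.div contDiffOn_id (fun t ht => ne_of_gt ht)
  have hmaps : Set.MapsTo (gFn m δ τ) U (Set.Ioi 0) := fun v _ => hgpos v
  have hcomp := (houter.ftaylorSeriesWithin (uniqueDiffOn_Ioi 0)).comp
    (hgcd.ftaylorSeriesWithin hU) hmaps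
  have hacomp : aDelta m δ τ = (fun t : ℝ => δ / t) ∘ gFn m δ τ := rfl
  have key : iteratedFDeriv ℝ n (aDelta m δ τ) w
      = ∑ c : OrderedFinpartition n,
          (ftaylorSeriesWithin ℝ (fun t : ℝ => δ / t) (Set.Ioi 0)
            (gFn m δ τ w)).compAlongOrderedFinpartition
              (ftaylorSeriesWithin ℝ (gFn m δ τ) U w) c := by
    rw [← iteratedFDerivWithin_of_isOpen n hUo hw', hacomp,
      ← hcomp.eq_iteratedFDerivWithin_of_uniqueDiffOn le_rfl hU hw']
    rfl
  have hterm : ∀ c : OrderedFinpartition n,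
      ‖(ftaylorSeriesWithin ℝ (fun t : ℝ => δ / t) (Set.Ioi 0)
          (gFn m δ τ w)).compAlongOrderedFinpartition
            (ftaylorSeriesWithin ℝ (gFn m δ τ) U w) c‖
        ≤ (n.factorial * Kb ^ n) * (δ / gFn m δ τ w) := by
    intro c
    have hkn : c.length ≤ n := c.length_le
    have hQ : ‖ftaylorSeriesWithin ℝ (fun t : ℝ => δ / t) (Set.Ioi 0)
        (gFn m δ τ w) c.length‖ = δ * c.length.factorial / gFn m δ τ w ^ (c.length + 1) := by
      have := outer_bound δ c.length (hgpos w)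
      rw [abs_of_pos hδ0] at this
      exact this
    have hP : ∀ i : Fin c.length,
        ‖ftaylorSeriesWithin ℝ (gFn m δ τ) U w (c.partSize i)‖ ≤ Kb * gFn m δ τ w := by
      intro i
      have h1 : 1 ≤ c.partSize i := Nat.one_le_iff_ne_zero.mpr (c.neZero_partSize i).out
      have h2 : c.partSize i ≤ n := c.partSize_le i
      have := gFn_deriv_bound (δ := δ) h1 h2 hτ hK10 hK20
        (fun v hv => hK1 _ h2 v hv) (fun v hv => hK2 _ h2 v hv) hwK
      calc ‖iteratedFDerivWithin ℝ (c.partSize i) (gFn m δ τ) U w‖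
          ≤ Kb * τ ^ 2 := this
        _ ≤ Kb * gFn m δ τ w := mul_le_mul_of_nonneg_left hτ2g (le_of_lt hKb0)
    calc ‖(ftaylorSeriesWithin ℝ (fun t : ℝ => δ / t) (Set.Ioi 0)
          (gFn m δ τ w)).compAlongOrderedFinpartition
            (ftaylorSeriesWithin ℝ (gFn m δ τ) U w) c‖
        ≤ ‖ftaylorSeriesWithin ℝ (fun t : ℝ => δ / t) (Set.Ioi 0)
            (gFn m δ τ w) c.length‖ *
            ∏ i, ‖ftaylorSeriesWithin ℝ (gFn m δ τ) U w (c.partSize i)‖ :=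
          norm_compAlongOrderedFinpartition_le _ _ c
      _ ≤ (δ * c.length.factorial / gFn m δ τ w ^ (c.length + 1)) * (Kb * gFn m δ τ w) ^ c.length := by
          rw [hQ]
          refine mul_le_mul_of_nonneg_left ?_
            (div_nonneg (by positivity) (le_of_lt (pow_pos (hgpos w) _)))
          calc ∏ i, ‖ftaylorSeriesWithin ℝ (gFn m δ τ) U w (c.partSize i)‖
              ≤ ∏ _i : Fin c.length, (Kb * gFn m δ τ w) :=
                Finset.prod_le_prod (fun _ _ => norm_nonneg _) (fun i _ => hP i)
            _ = (Kb * gFn m δ τ w) ^ c.length := by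
                rw [Finset.prod_const, Finset.card_univ, Fintype.card_fin]
      _ = (c.length.factorial * Kb ^ c.length) * (δ / gFn m δ τ w) := by
          have hne : gFn m δ τ w ≠ 0 := (hgpos w).ne'
          rw [mul_pow, pow_succ]
          field_simp
      _ ≤ (n.factorial * Kb ^ n) * (δ / gFn m δ τ w) := by
          refine mul_le_mul_of_nonneg_right ?_
            (le_of_lt (div_pos hδ0 (hgpos w)))
          refine mul_le_mul ?_ (pow_le_pow_right₀ hKb1 hkn)
            (pow_nonneg (le_of_lt hKb0) _) (by positivity)
          exact_mod_cast Nat.factorial_le hkn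
  calc ‖iteratedFDeriv ℝ n (aDelta m δ τ) w‖
      ≤ ∑ c : OrderedFinpartition n,
          ‖(ftaylorSeriesWithin ℝ (fun t : ℝ => δ / t) (Set.Ioi 0)
            (gFn m δ τ w)).compAlongOrderedFinpartition
              (ftaylorSeriesWithin ℝ (gFn m δ τ) U w) c‖ := by
        rw [key]; exact norm_sum_le _ _
    _ ≤ ∑ _c : OrderedFinpartition n, (n.factorial * Kb ^ n) * (δ / gFn m δ τ w) :=
        Finset.sum_le_sum (fun c _ => hterm c)
    _ = (Fintype.card (OrderedFinpartition n) : ℝ) * n.factorial * Kb ^ n *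
          (δ / gFn m δ τ w) := by
        rw [Finset.sum_const, Finset.card_univ, nsmul_eq_mul]
        ring
    _ = (Fintype.card (OrderedFinpartition n) : ℝ) * n.factorial * Kb ^ n *
          (δ / (τ ^ 2 * (τ + 2 * psiFn m w - 2) ^ 2 + δ ^ 2)) := rfl

end
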